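/- Let G be a finite group, N a finite group, f : G → Aut(N) a homomorphism, and g : G → N a bijective crossed homomorphism with respect to f. Then the set {ρ(g(σ)) ∘ f(σ) : σ ∈ G} is a subgroup of Perm(N) acting regularly on N and is isomorphic to G, where ρ(η)(x) = xη⁻¹. -/
import Mathlib


theorem regular_subgroup_from_bijective_crossed_hom
    {G N : Type*} [Group G] [Group N] [Finite G] [Finite N]
    (f : G →* MulAut N) (g : G → N) (hbij : Function.Bijective g)
    (hg : ∀ σ τ : G, g (σ * τ) = g σ * f σ (g τ)) :
    ∃ S : Subgroup (Equiv.Perm N),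
      (S : Set (Equiv.Perm N)) =
        Set.range (fun σ : G =>
          (Equiv.mulRight (g σ)⁻¹ : Equiv.Perm N) * (f σ : Equiv.Perm N)) ∧
      (∀ x y : N, ∃! π : Equiv.Perm N, π ∈ S ∧ π x = y) ∧
      Nonempty (G ≃* S) := by
  have hone : g 1 = 1 := by
    have := hg 1 1
    simp only [mul_one, map_one, MulAut.one_apply] at this
    exact (left_eq_mul.mp this)
  set φ : G →* Equiv.Perm N :=
    { toFun := fun σ => (Equiv.mulRight (g σ)⁻¹ : Equiv.Perm N) * (f σ : Equiv.Perm N)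
      map_one' := by
        ext x
        simp [hone]
      map_mul' := by
        intro σ τ
        ext x
        simp [hg, mul_assoc] } with hφ
  have happ : ∀ σ x, φ σ x = f σ x * (g σ)⁻¹ := by
    intro σ x
    simp [hφ]
  have happ1 : ∀ σ, φ σ 1 = (g σ)⁻¹ := by
    intro σ
    simp [happ]
  have hinj : Function.Injective φ := by
    intro σ τ h
    apply hbij.1
    have h1 : φ σ 1 = φ τ 1 := by rw [h]
    rw [happ1, happ1] at h1
    exact inv_injective h1
  have hkey : ∀ x : N, Function.Bijective (fun σ : G => φ σ x) := by
    intro x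
    obtain ⟨σ₁, hσ₁⟩ := hbij.2 x⁻¹
    have hx : φ σ₁ 1 = x := by rw [happ1, hσ₁, inv_inv]
    have heq : (fun σ : G => φ σ x) = (fun σ : G => (g (σ * σ₁))⁻¹) := by
      funext σ
      rw [← hx, ← Equiv.Perm.mul_apply, ← map_mul, happ1]
    rw [heq]
    exact inv_involutive.bijective.comp (hbij.comp (Group.mulRight_bijective σ₁))
  refine ⟨φ.range, ?_, ?_, ⟨MonoidHom.ofInjective hinj⟩⟩
  · rw [MonoidHom.coe_range]
    rfl
  · intro x y
    obtain ⟨σ, hσ⟩ := (hkey x).2 y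
    refine ⟨φ σ, ⟨⟨σ, rfl⟩, hσ⟩, ?_⟩
    rintro π ⟨⟨τ, rfl⟩, hπx⟩
    have : τ = σ := (hkey x).1 (by simpa using hπx.trans hσ.symm)
    rw [this]
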